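/- If E' ⊆ 𝓑 × 𝓑 is the arc set of a Hamiltonian (directed) cycle in the body graph D_𝓑, then Φ_{E'} represents h_𝓑 and |Φ_{E'}|_TA ≤ 2 · OPT_TA(𝓑). -/

import Mathlib

open Finset

variable {V : Type*} [Fintype V] [DecidableEq V]

/-- A pure Horn CNF is a finite set of clauses `(B, v)`: body `B`, head `v`,
with `B` nonempty and `v ∉ B`. -/
def PureHorn (Φ : Finset (Finset V × V)) : Prop :=
  ∀ c ∈ Φ, c.1.Nonempty ∧ c.2 ∉ c.1

/-- A set `W` is closed under the clauses of `Φ`. -/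
def HornClosed (Φ : Finset (Finset V × V)) (W : Set V) : Prop :=
  ∀ c ∈ Φ, ↑c.1 ⊆ W → c.2 ∈ W

/-- Forward-chaining closure `F_Φ(Z)`: the smallest set containing `Z`
that is closed under the clauses of `Φ`. -/
def hornClosure (Φ : Finset (Finset V × V)) (Z : Set V) : Set V :=
  ⋂₀ {W : Set V | Z ⊆ W ∧ HornClosed Φ W}

/-- `Ψ_𝓑 = ⋀_{B ∈ 𝓑} B → (V \ B)`. -/
def keyCNF (𝓑 : Finset (Finset V)) : Finset (Finset V × V) :=
  𝓑.biUnion fun B => (Finset.univ \ B).image fun v => (B, v)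

/-- `Φ` represents the key Horn function `h_𝓑`, i.e. `Φ` is a pure Horn CNF
equivalent to `Ψ_𝓑`. -/
def Represents (𝓑 : Finset (Finset V)) (Φ : Finset (Finset V × V)) : Prop :=
  PureHorn Φ ∧ ∀ Z : Finset V, hornClosure Φ ↑Z = hornClosure (keyCNF 𝓑) ↑Z

/-- (B) number of (distinct) bodies. -/
def sizeB (Φ : Finset (Finset V × V)) : ℕ := (Φ.image Prod.fst).card
/-- (BA) body area `Σ_i |B_i|` over the distinct bodies. -/
def sizeBA (Φ : Finset (Finset V × V)) : ℕ := ∑ B ∈ Φ.image Prod.fst, B.card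
/-- (C) number of clauses `Σ_i |H_i|`. -/
def sizeC (Φ : Finset (Finset V × V)) : ℕ := Φ.card
/-- (TA) total area `Σ_i (|B_i| + |H_i|)`. -/
def sizeTA (Φ : Finset (Finset V × V)) : ℕ := sizeBA Φ + sizeC Φ
/-- (BC) bodies plus clauses `Σ_i (|H_i| + 1)`. -/
def sizeBC (Φ : Finset (Finset V × V)) : ℕ := sizeB Φ + sizeC Φ
/-- (L) number of literals `Σ_i (|B_i| + 1)·|H_i|`. -/
def sizeL (Φ : Finset (Finset V × V)) : ℕ := ∑ c ∈ Φ, (c.1.card + 1)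

/-- `μ` is one of the six size measures. -/
def IsMeasure (μ : Finset (Finset V × V) → ℕ) : Prop :=
  μ = sizeB ∨ μ = sizeBA ∨ μ = sizeTA ∨ μ = sizeC ∨ μ = sizeBC ∨ μ = sizeL

/-- `OPT_μ(𝓑)`: minimum `μ`-size of a CNF representing `h_𝓑`. -/
noncomputable def OPT (μ : Finset (Finset V × V) → ℕ) (𝓑 : Finset (Finset V)) : ℕ :=
  sInf {s : ℕ | ∃ Φ : Finset (Finset V × V), Represents 𝓑 Φ ∧ μ Φ = s}

/-- `price_μ(S,T)`: minimum `μ`-size of a pure Horn CNF with bodies in `𝓑`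
whose forward chaining from `S` reaches all of `T`. -/
noncomputable def price (μ : Finset (Finset V × V) → ℕ) (𝓑 : Finset (Finset V))
    (S T : Finset V) : ℕ :=
  sInf {s : ℕ | ∃ Φ : Finset (Finset V × V),
    PureHorn Φ ∧ (∀ c ∈ Φ, c.1 ∈ 𝓑) ∧ ↑T ⊆ hornClosure Φ ↑S ∧ μ Φ = s}

section Aux

set_option linter.unusedSectionVars false

lemma subset_hornClosure (Φ : Finset (Finset V × V)) (Z : Set V) :
    Z ⊆ hornClosure Φ Z := fun _ hv => Set.mem_sInter.2 fun _ hW => hW.1 hv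

lemma hornClosure_le {Φ : Finset (Finset V × V)} {Z W : Set V}
    (h1 : Z ⊆ W) (h2 : HornClosed Φ W) : hornClosure Φ Z ⊆ W :=
  Set.sInter_subset_of_mem ⟨h1, h2⟩

lemma hornClosed_closure (Φ : Finset (Finset V × V)) (Z : Set V) :
    HornClosed Φ (hornClosure Φ Z) := by
  intro c hc hsub
  refine Set.mem_sInter.2 fun W hW => ?_
  exact hW.2 c hc (hsub.trans (Set.sInter_subset_of_mem hW))

lemma hornClosure_mono_cnf {Φ Φ' : Finset (Finset V × V)} (h : Φ ⊆ Φ') (Z : Set V) :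
    hornClosure Φ Z ⊆ hornClosure Φ' Z :=
  hornClosure_le (subset_hornClosure Φ' Z)
    (fun c hc => hornClosed_closure Φ' Z c (h hc))

lemma mem_keyCNF {𝓑 : Finset (Finset V)} {C : Finset V} {w : V} :
    (C, w) ∈ keyCNF 𝓑 ↔ C ∈ 𝓑 ∧ w ∉ C := by
  simp only [keyCNF, Finset.mem_biUnion, Finset.mem_image, Finset.mem_sdiff,
    Finset.mem_univ, true_and, Prod.mk.injEq]
  constructor
  · rintro ⟨B, hB, v, hv, rfl, rfl⟩; exact ⟨hB, hv⟩
  · rintro ⟨hC, hw⟩; exact ⟨C, hC, w, hw, rfl, rfl⟩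

/-- Every CNF representing `h_𝓑` has every member of `𝓑` among its bodies. -/
lemma bodies_of_represents {𝓑 : Finset (Finset V)}
    (hproper : ∀ B ∈ 𝓑, B ≠ Finset.univ)
    (hsperner : ∀ B ∈ 𝓑, ∀ B' ∈ 𝓑, B ⊆ B' → B = B')
    {Φ' : Finset (Finset V × V)} (hrep : Represents 𝓑 Φ') :
    𝓑 ⊆ Φ'.image Prod.fst := by
  intro B hB
  obtain ⟨v, hv⟩ : ∃ v, v ∉ B := by
    by_contra h; push_neg at h
    exact hproper B hB (Finset.eq_univ_iff_forall.2 h)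
  have hkey : v ∈ hornClosure (keyCNF 𝓑) ↑B :=
    hornClosed_closure (keyCNF 𝓑) ↑B (B, v) (mem_keyCNF.2 ⟨hB, hv⟩)
      (subset_hornClosure _ _)
  have hv' : v ∈ hornClosure Φ' ↑B := by rw [hrep.2 B]; exact hkey
  have hcl : ∃ c ∈ Φ', ↑c.1 ⊆ (↑B : Set V) ∧ c.2 ∉ B := by
    by_contra h; push_neg at h
    have hclosed : HornClosed Φ' ↑B := fun c hc hsub => h c hc hsub
    exact hv (hornClosure_le Set.Subset.rfl hclosed hv')
  obtain ⟨c, hc, hsub, _⟩ := hcl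
  have hpure := hrep.1 c hc
  have h2 : c.2 ∈ hornClosure Φ' ↑c.1 :=
    hornClosed_closure Φ' ↑c.1 c hc (subset_hornClosure _ _)
  have h2k : c.2 ∈ hornClosure (keyCNF 𝓑) ↑c.1 := by rw [← hrep.2 c.1]; exact h2
  have hB'' : ∃ B'' ∈ 𝓑, B'' ⊆ c.1 := by
    by_contra h; push_neg at h
    have hclosed : HornClosed (keyCNF 𝓑) ↑c.1 := by
      rintro ⟨D, u⟩ hd hdsub
      obtain ⟨hd1, _⟩ := mem_keyCNF.1 hd
      exact absurd (Finset.coe_subset.1 hdsub) (h D hd1)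
    exact hpure.2 (hornClosure_le Set.Subset.rfl hclosed h2k)
  obtain ⟨B'', hB''m, hB''sub⟩ := hB''
  have heq : B'' = B := hsperner B'' hB''m B hB (hB''sub.trans (Finset.coe_subset.1 hsub))
  have hc1 : c.1 = B := subset_antisymm (Finset.coe_subset.1 hsub) (heq ▸ hB''sub)
  exact Finset.mem_image.2 ⟨c, hc, hc1⟩

end Aux

/-- If `E'` is the arc set of a Hamiltonian directed cycle in the body graph
(encoded by a successor map `nxt` acting on `𝓑` as a single full cycle), then
`Φ_{E'} = ⋀_{B ∈ 𝓑} B → (nxt B \ B)` represents `h_𝓑` and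
`|Φ_{E'}|_TA ≤ 2 · OPT_TA(𝓑)`. -/
theorem stmt5 {V : Type*} [Fintype V] [DecidableEq V]
    (𝓑 : Finset (Finset V))
    (hne : ∀ B ∈ 𝓑, B.Nonempty) (hproper : ∀ B ∈ 𝓑, B ≠ Finset.univ)
    (hsperner : ∀ B ∈ 𝓑, ∀ B' ∈ 𝓑, B ⊆ B' → B = B')
    (hcover : ∀ v : V, ∃ B ∈ 𝓑, v ∈ B)
    (hinter : ∀ v : V, ∃ B ∈ 𝓑, v ∉ B)
    (nxt : Finset V → Finset V)
    (hmem : ∀ B ∈ 𝓑, nxt B ∈ 𝓑)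
    (hinj : ∀ B ∈ 𝓑, ∀ B' ∈ 𝓑, nxt B = nxt B' → B = B')
    (hham : ∀ B ∈ 𝓑, ∀ B' ∈ 𝓑, ∃ j : ℕ, nxt^[j] B = B')
    (Φ : Finset (Finset V × V))
    (hΦ : Φ = 𝓑.biUnion fun B => (nxt B \ B).image fun v => (B, v)) :
    Represents 𝓑 Φ ∧ sizeTA Φ ≤ 2 * OPT sizeTA 𝓑 := by
  have hmemΦ : ∀ C w, (C, w) ∈ Φ ↔ C ∈ 𝓑 ∧ w ∈ nxt C ∧ w ∉ C := by
    intro C w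
    simp only [hΦ, Finset.mem_biUnion, Finset.mem_image, Finset.mem_sdiff, Prod.mk.injEq]
    constructor
    · rintro ⟨B, hB, v, ⟨hv1, hv2⟩, rfl, rfl⟩; exact ⟨hB, hv1, hv2⟩
    · rintro ⟨hC, hw1, hw2⟩; exact ⟨C, hC, w, ⟨hw1, hw2⟩, rfl, rfl⟩
  have hpure : PureHorn Φ := by
    rintro ⟨C, w⟩ hc
    obtain ⟨h1, _, h3⟩ := (hmemΦ C w).1 hc
    exact ⟨hne C h1, h3⟩
  have hΦkey : Φ ⊆ keyCNF 𝓑 := by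
    rintro ⟨C, w⟩ hc
    obtain ⟨h1, _, h3⟩ := (hmemΦ C w).1 hc
    exact mem_keyCNF.2 ⟨h1, h3⟩
  have hEq : ∀ Z : Set V, hornClosure Φ Z = hornClosure (keyCNF 𝓑) Z := by
    intro Z
    refine Set.Subset.antisymm (hornClosure_mono_cnf hΦkey Z) ?_
    refine hornClosure_le (subset_hornClosure Φ Z) ?_
    rintro ⟨C, w⟩ hcK hsub
    obtain ⟨hC, _⟩ := mem_keyCNF.1 hcK
    have claim : ∀ j, nxt^[j] C ∈ 𝓑 ∧ ↑(nxt^[j] C) ⊆ hornClosure Φ Z := by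
      intro j; induction j with
      | zero => exact ⟨hC, hsub⟩
      | succ j ih =>
        rw [Function.iterate_succ_apply']
        refine ⟨hmem _ ih.1, ?_⟩
        intro u hu
        by_cases h : u ∈ nxt^[j] C
        · exact ih.2 h
        · exact hornClosed_closure Φ Z (nxt^[j] C, u)
            ((hmemΦ _ u).2 ⟨ih.1, Finset.mem_coe.1 hu, h⟩) ih.2
    obtain ⟨B', hB', hvB'⟩ := hcover w
    obtain ⟨j, hj⟩ := hham C hC B' hB'
    have hcl := (claim j).2
    rw [hj] at hcl
    exact hcl hvB'
  have hrep : Represents 𝓑 Φ := ⟨hpure, fun Z => hEq ↑Z⟩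
  refine ⟨hrep, ?_⟩
  have himg : 𝓑.image nxt = 𝓑 := by
    apply Finset.eq_of_subset_of_card_le
    · intro C hC
      obtain ⟨B, hB, rfl⟩ := Finset.mem_image.1 hC
      exact hmem B hB
    · rw [Finset.card_image_of_injOn (fun a ha b hb h => hinj a ha b hb h)]
  have hsum_nxt : ∑ B ∈ 𝓑, (nxt B).card = ∑ B ∈ 𝓑, B.card := by
    have h : ∑ C ∈ 𝓑.image nxt, C.card = ∑ B ∈ 𝓑, (nxt B).card :=
      Finset.sum_image (fun a ha b hb h => hinj a ha b hb h)
    rw [himg] at h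
    exact h.symm
  have hBA : sizeBA Φ ≤ ∑ B ∈ 𝓑, B.card := by
    apply Finset.sum_le_sum_of_subset
    intro C hC
    obtain ⟨c, hc, rfl⟩ := Finset.mem_image.1 hC
    exact ((hmemΦ c.1 c.2).1 hc).1
  have hCle : sizeC Φ ≤ ∑ B ∈ 𝓑, B.card := by
    have hcard : sizeC Φ = ∑ B ∈ 𝓑, (nxt B \ B).card := by
      rw [sizeC, hΦ, Finset.card_biUnion]
      · exact Finset.sum_congr rfl fun B _ =>
          Finset.card_image_of_injective _ (fun a b h => (Prod.mk.injEq _ _ _ _ ▸ h).2)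
      · intro B hB B' hB' hne'
        simp only [Function.onFun]
        rw [Finset.disjoint_left]
        rintro ⟨D, u⟩ h1 h2
        obtain ⟨v, _, hv2⟩ := Finset.mem_image.1 h1
        obtain ⟨v', _, hv2'⟩ := Finset.mem_image.1 h2
        apply hne'
        have e1 := (Prod.mk.injEq _ _ _ _ ▸ hv2).1
        have e2 := (Prod.mk.injEq _ _ _ _ ▸ hv2').1
        rw [e1, e2]
    rw [hcard, ← hsum_nxt]
    exact Finset.sum_le_sum fun B _ => Finset.card_le_card Finset.sdiff_subset
  have hopt : ∑ B ∈ 𝓑, B.card ≤ OPT sizeTA 𝓑 := by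
    rw [OPT]
    refine le_csInf ⟨sizeTA Φ, ⟨Φ, hrep, rfl⟩⟩ ?_
    rintro s ⟨Φ', hrep', rfl⟩
    calc ∑ B ∈ 𝓑, B.card
        ≤ sizeBA Φ' := Finset.sum_le_sum_of_subset
          (bodies_of_represents hproper hsperner hrep')
      _ ≤ sizeTA Φ' := Nat.le_add_right _ _
  calc sizeTA Φ = sizeBA Φ + sizeC Φ := rfl
    _ ≤ (∑ B ∈ 𝓑, B.card) + ∑ B ∈ 𝓑, B.card := Nat.add_le_add hBA hCle
    _ = 2 * ∑ B ∈ 𝓑, B.card := (Nat.two_mul _).symm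
    _ ≤ 2 * OPT sizeTA 𝓑 := Nat.mul_le_mul_left 2 hopt
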